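/- arXiv:2301.06276 — 5 statements merged into one kernel-verified Lean document; each statement's English description precedes it below -/
import Mathlib

section
/- Fix p ∈ (0, 1] and ε ∈ [0, 1], and define f_p(y) = (e^y − 1)/(e^y + (1−p)/p). Then for all y ∈ [0, ε], (1−ε)·p·y ≤ f_p(y) ≤ (1+ε)·p·y. -/
theorem piecewise_linear_domination_pos (p ε : ℝ) (hp : p ∈ Set.Ioc (0:ℝ) 1)
    (hε : ε ∈ Set.Icc (0:ℝ) 1) :
    ∀ y ∈ Set.Icc (0:ℝ) ε,
      (1 - ε) * p * y ≤ (Real.exp y - 1) / (Real.exp y + (1 - p) / p) ∧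
      (Real.exp y - 1) / (Real.exp y + (1 - p) / p) ≤ (1 + ε) * p * y := by
  obtain ⟨hp0, hp1⟩ := hp
  obtain ⟨hε0, hε1⟩ := hε
  intro y hy
  obtain ⟨hy0, hyε⟩ := hy
  have hy1 : y ≤ 1 := hyε.trans hε1
  set E := Real.exp y with hE
  have hEpos : 0 < E := Real.exp_pos y
  have h3 : 1 + y ≤ E := by have := Real.add_one_le_exp y; linarith
  have h1 : (1 - y) * E ≤ 1 := by
    have h := Real.add_one_le_exp (-y)
    rw [Real.exp_neg] at h
    have : (1 - y) * E ≤ E⁻¹ * E := by nlinarith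
    rwa [inv_mul_cancel₀ (ne_of_gt hEpos)] at this
  have h2 : E ≤ 1 + y + y ^ 2 := by
    have hb := Real.exp_bound (x := y) (by rw [abs_of_nonneg hy0]; exact hy1) (n := 2) (by norm_num)
    have hsum : (∑ m ∈ Finset.range 2, y ^ m / (m.factorial : ℝ)) = 1 + y := by
      simp [Finset.sum_range_succ]
    rw [hsum, abs_of_nonneg hy0] at hb
    have h := (abs_le.mp hb).2
    norm_num [Nat.factorial] at h
    nlinarith [h]
  have hD : 0 < E + (1 - p) / p := by
    have : 0 ≤ (1 - p) / p := div_nonneg (by linarith) hp0.le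
    linarith
  have hpd : p * ((1 - p) / p) = 1 - p := by field_simp
  constructor
  · rw [le_div_iff₀ hD]
    nlinarith [mul_nonneg hy0 (sub_nonneg.mpr hp1), mul_nonneg hε0 (mul_nonneg hy0 hp0.le),
      mul_nonneg hε0 (mul_nonneg hy0 (sub_nonneg.mpr hp1)),
      mul_nonneg (mul_nonneg hε0 hy0) (mul_nonneg hp0.le hEpos.le),
      mul_nonneg hy0 hEpos.le, mul_nonneg hp0.le (sub_nonneg.mpr h1)]
  · rw [div_le_iff₀ hD]
    nlinarith [mul_nonneg hy0 (sub_nonneg.mpr hp1), mul_nonneg hε0 hy0,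
      mul_nonneg (mul_nonneg hε0 hy0) hp0.le,
      mul_nonneg (mul_nonneg hε0 hy0) (mul_nonneg hp0.le (by linarith : (0:ℝ) ≤ E - 1)),
      mul_nonneg hy0 (mul_nonneg hp0.le (by linarith : (0:ℝ) ≤ E - 1)),
      sq_nonneg y, mul_le_mul_of_nonneg_left hyε hy0]
end

section
/- Fix p ∈ (0, 1] and ε ∈ [0, 1], and define f_p(y) = (e^y − 1)/(e^y + (1−p)/p). Then for all y ∈ [−ε, 0], (1+ε)·p·y ≤ f_p(y) ≤ (1−ε)·p·y. -/
theorem piecewise_linear_domination_neg (p ε : ℝ) (hp : p ∈ Set.Ioc (0:ℝ) 1)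
    (hε : ε ∈ Set.Icc (0:ℝ) 1) :
    ∀ y ∈ Set.Icc (-ε) (0:ℝ),
      (1 + ε) * p * y ≤ (Real.exp y - 1) / (Real.exp y + (1 - p) / p) ∧
      (Real.exp y - 1) / (Real.exp y + (1 - p) / p) ≤ (1 - ε) * p * y := by
  obtain ⟨hp0, hp1⟩ := hp
  obtain ⟨hε0, hε1⟩ := hε
  intro y hy
  obtain ⟨hy1, hy2⟩ := hy
  have hyneg : y ≤ 0 := hy2
  have hy1' : -1 ≤ y := le_trans (by linarith) hy1
  set E := Real.exp y with hE
  have hEpos : 0 < E := Real.exp_pos y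
  have hE1 : E ≤ 1 := Real.exp_le_one_iff.mpr hyneg
  have hA : 1 + y ≤ E := by
    have := Real.add_one_le_exp y; linarith
  have hmul : E * Real.exp (-y) = 1 := by
    rw [hE, ← Real.exp_add]; simp
  -- E * (1 - y) ≤ 1
  have hEup : E * (1 - y) ≤ 1 := by
    have h := Real.add_one_le_exp (-y)
    calc E * (1 - y) ≤ E * Real.exp (-y) := by nlinarith
    _ = 1 := hmul
  -- exp (-y) ≤ 1 - y + y^2, hence 1 ≤ E * (1 - y + y^2)
  have hexpneg : Real.exp (-y) ≤ 1 - y + y ^ 2 := by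
    have h := Real.exp_bound' (by linarith : (0:ℝ) ≤ -y) (by linarith : -y ≤ 1)
      (by norm_num : 0 < 3)
    have hsum : (∑ m ∈ Finset.range 3, (-y) ^ m / m.factorial) +
        (-y) ^ 3 * (3 + 1) / (3*2*1 * 3) = 1 - y + y^2/2 - 2*y^3/9 := by
      simp [Finset.sum_range_succ, Nat.factorial]
      ring
    have h2 : Real.exp (-y) ≤ 1 - y + y^2/2 - 2*y^3/9 := by
      rw [← hsum]
      convert h using 3
      all_goals norm_num [Nat.factorial, show Nat.factorial 3 = 6 from rfl]
    nlinarith [sq_nonneg y, mul_nonneg (sq_nonneg y) (by linarith : (0:ℝ) ≤ y + 1)]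
  have hC : 1 ≤ E * (1 - y + y ^ 2) := by
    calc (1:ℝ) = E * Real.exp (-y) := hmul.symm
    _ ≤ E * (1 - y + y ^ 2) := by nlinarith
  -- denominator
  have hq : 0 ≤ (1 - p) / p := div_nonneg (by linarith) (le_of_lt hp0)
  have hD : 0 < E + (1 - p) / p := by linarith
  have hpD : p * (E + (1 - p) / p) = p * E + (1 - p) := by
    field_simp
  constructor
  · rw [le_div_iff₀ hD]
    have key : (1 + ε) * y * (p * E + (1 - p)) ≤ E - 1 := by
      nlinarith [mul_nonneg (mul_nonneg (by linarith : (0:ℝ) ≤ -y) (by linarith : (0:ℝ) ≤ ε + y)) hEpos.le,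
        mul_nonneg (mul_nonneg (mul_nonneg (by linarith : (0:ℝ) ≤ 1 - p) (by linarith : (0:ℝ) ≤ 1 + ε)) (by linarith : (0:ℝ) ≤ -y)) (by linarith : (0:ℝ) ≤ 1 - E)]
    calc (1 + ε) * p * y * (E + (1 - p) / p)
        = (1 + ε) * y * (p * (E + (1 - p) / p)) := by ring
      _ = (1 + ε) * y * (p * E + (1 - p)) := by rw [hpD]
      _ ≤ E - 1 := key
  · rw [div_le_iff₀ hD]
    have key : E - 1 ≤ (1 - ε) * y * (p * E + (1 - p)) := by
      nlinarith [mul_nonneg (by linarith : (0:ℝ) ≤ -y) (by linarith : (0:ℝ) ≤ E - (1 - ε)),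
        mul_nonneg (mul_nonneg (mul_nonneg (by linarith : (0:ℝ) ≤ 1 - ε) hp0.le) (by linarith : (0:ℝ) ≤ -y)) (by linarith : (0:ℝ) ≤ 1 - E)]
    calc E - 1 ≤ (1 - ε) * y * (p * E + (1 - p)) := key
      _ = (1 - ε) * y * (p * (E + (1 - p) / p)) := by rw [hpD]
      _ = (1 - ε) * p * y * (E + (1 - p) / p) := by ring
end

section
/- Let K ≥ 2, let r ∈ [0,1]^K with a unique maximizing index a*, and let Δ = r(a*) − max_{a ≠ a*} r(a) > 0 be the reward gap. Then for any probability vector π on {1,…,K}, ∑_{i=1}^K π(i)² · |r(i) − π·r|³ ≥ (Δ/(K−1)) · π(a*)² · (r(a*) − π·r)². -/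
theorem aux_stochastic_NL (K : ℕ) (hK : 2 ≤ K) (r π : Fin K → ℝ)
    (astar : Fin K) (hmax : ∀ a, a ≠ astar → r a < r astar)
    (hπ : ∀ i, 0 ≤ π i) (hπ1 : ∑ i, π i = 1)
    (M : ℝ) (hub : ∀ a, a ≠ astar → r a ≤ M) (hlt : M < r astar) :
    ∑ i, (π i) ^ 2 * |r i - ∑ j, π j * r j| ^ 3 ≥
      ((r astar - M) / (K - 1)) * (π astar) ^ 2 * (r astar - ∑ j, π j * r j) ^ 2 := by
  have hK1 : (1:ℝ) ≤ (K:ℝ) - 1 := by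
    have h2 : (2:ℝ) ≤ (K:ℝ) := by exact_mod_cast hK
    linarith
  have hK0 : (0:ℝ) < (K:ℝ) - 1 := by linarith
  set m := ∑ j, π j * r j with hm
  have hle : ∀ a, r a ≤ r astar := by
    intro a
    by_cases h : a = astar
    · simp [h]
    · exact (hmax a h).le
  have hmle : m ≤ r astar := by
    rw [hm]
    calc ∑ j, π j * r j ≤ ∑ j, π j * r astar :=
          Finset.sum_le_sum fun i _ => mul_le_mul_of_nonneg_left (hle i) (hπ i)
      _ = r astar := by rw [← Finset.sum_mul, hπ1, one_mul]
  have hid : ∑ a ∈ Finset.univ.erase astar, π a * (m - r a) = π astar * (r astar - m) := by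
    have h0 : ∑ a, π a * (m - r a) = 0 := by
      simp only [mul_sub]
      rw [Finset.sum_sub_distrib, ← Finset.sum_mul, hπ1, one_mul, ← hm, sub_self]
    have h1 := Finset.add_sum_erase Finset.univ (fun a => π a * (m - r a))
      (Finset.mem_univ astar)
    rw [h0] at h1
    linear_combination h1
  have hLnn : (0:ℝ) ≤ ∑ i, (π i) ^ 2 * |r i - m| ^ 3 :=
    Finset.sum_nonneg fun i _ => mul_nonneg (sq_nonneg _) (pow_nonneg (abs_nonneg _) 3)
  rw [ge_iff_le, div_mul_eq_mul_div, div_mul_eq_mul_div, div_le_iff₀ hK0]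
  by_cases hcase : r astar - M ≤ r astar - m
  · -- m ≤ M : the astar term alone suffices
    have hterm : (π astar) ^ 2 * |r astar - m| ^ 3 ≤ ∑ i, (π i) ^ 2 * |r i - m| ^ 3 :=
      Finset.single_le_sum (f := fun i => (π i) ^ 2 * |r i - m| ^ 3)
        (fun i _ => mul_nonneg (sq_nonneg _) (pow_nonneg (abs_nonneg _) 3))
        (Finset.mem_univ astar)
    rw [abs_of_nonneg (by linarith : (0:ℝ) ≤ r astar - m)] at hterm
    have h3 : (r astar - M) * ((π astar) ^ 2 * (r astar - m) ^ 2)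
        ≤ (r astar - m) * ((π astar) ^ 2 * (r astar - m) ^ 2) :=
      mul_le_mul_of_nonneg_right hcase (by positivity)
    have h4 : (∑ i, (π i) ^ 2 * |r i - m| ^ 3) * 1
        ≤ (∑ i, (π i) ^ 2 * |r i - m| ^ 3) * ((K:ℝ) - 1) :=
      mul_le_mul_of_nonneg_left hK1 hLnn
    nlinarith [h3, hterm, h4]
  · -- m > M
    push_neg at hcase
    have hypos : (0:ℝ) < (r astar - M) - (r astar - m) := by linarith
    have hy : ∀ a ∈ Finset.univ.erase astar,
        (r astar - M) - (r astar - m) ≤ m - r a := by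
      intro a ha
      have := hub a (Finset.ne_of_mem_erase ha)
      linarith
    have hLHS : ∑ i, (π i) ^ 2 * |r i - m| ^ 3
        = (π astar) ^ 2 * (r astar - m) ^ 3
          + ∑ a ∈ Finset.univ.erase astar, (π a) ^ 2 * (m - r a) ^ 3 := by
      rw [← Finset.add_sum_erase Finset.univ (fun i => (π i) ^ 2 * |r i - m| ^ 3)
        (Finset.mem_univ astar)]
      congr 1
      · rw [abs_of_nonneg (by linarith : (0:ℝ) ≤ r astar - m)]
      · apply Finset.sum_congr rfl
        intro a ha
        rw [abs_sub_comm, abs_of_pos (lt_of_lt_of_le hypos (hy a ha))]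
    have hcard : ((Finset.univ.erase astar).card : ℝ) = (K:ℝ) - 1 := by
      rw [Finset.card_erase_of_mem (Finset.mem_univ astar)]
      simp
      rw [Nat.cast_sub (by omega)]
      simp
    have hCS : (∑ a ∈ Finset.univ.erase astar, π a * (m - r a)) ^ 2
        ≤ ((K:ℝ) - 1) * ∑ a ∈ Finset.univ.erase astar, (π a * (m - r a)) ^ 2 := by
      have := sq_sum_le_card_mul_sum_sq (s := Finset.univ.erase astar)
        (f := fun a => π a * (m - r a))
      rwa [hcard] at this
    rw [hid] at hCS
    have hB : ((r astar - M) - (r astar - m))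
          * ∑ a ∈ Finset.univ.erase astar, (π a * (m - r a)) ^ 2
        ≤ ∑ a ∈ Finset.univ.erase astar, (π a) ^ 2 * (m - r a) ^ 3 := by
      rw [Finset.mul_sum]
      apply Finset.sum_le_sum
      intro a ha
      calc ((r astar - M) - (r astar - m)) * (π a * (m - r a)) ^ 2
          = ((r astar - M) - (r astar - m)) * ((π a) ^ 2 * (m - r a) ^ 2) := by ring
        _ ≤ (m - r a) * ((π a) ^ 2 * (m - r a) ^ 2) :=
            mul_le_mul_of_nonneg_right (hy a ha) (by positivity)
        _ = (π a) ^ 2 * (m - r a) ^ 3 := by ring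
    rw [hLHS]
    have h5 : ((r astar - M) - (r astar - m)) * ((π astar * (r astar - m)) ^ 2)
        ≤ ((r astar - M) - (r astar - m))
          * (((K:ℝ) - 1) * ∑ a ∈ Finset.univ.erase astar, (π a * (m - r a)) ^ 2) :=
      mul_le_mul_of_nonneg_left hCS hypos.le
    have h6 : ((K:ℝ) - 1) * (((r astar - M) - (r astar - m))
          * ∑ a ∈ Finset.univ.erase astar, (π a * (m - r a)) ^ 2)
        ≤ ((K:ℝ) - 1) * ∑ a ∈ Finset.univ.erase astar, (π a) ^ 2 * (m - r a) ^ 3 :=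
      mul_le_mul_of_nonneg_left hB hK0.le
    have h7 : (π astar) ^ 2 * (r astar - m) ^ 3
        ≤ ((K:ℝ) - 1) * ((π astar) ^ 2 * (r astar - m) ^ 3) :=
      le_mul_of_one_le_left
        (mul_nonneg (sq_nonneg _) (pow_nonneg (by linarith : (0:ℝ) ≤ r astar - m) 3)) hK1
    nlinarith [h5, h6, h7]

theorem stochastic_NL_inequality (K : ℕ) (hK : 2 ≤ K) (r π : Fin K → ℝ)
    (hr : ∀ i, r i ∈ Set.Icc (0:ℝ) 1)
    (astar : Fin K) (hmax : ∀ a, a ≠ astar → r a < r astar)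
    (hπ : ∀ i, 0 ≤ π i) (hπ1 : ∑ i, π i = 1)
    (Δ : ℝ)
    (hΔ : Δ = r astar - (Finset.univ.erase astar).sup'
      (by
        rw [Finset.erase_nonempty (Finset.mem_univ astar),
          ← Finset.one_lt_card_iff_nontrivial]
        simpa using (show 1 < K by omega)) r) :
    ∑ i, (π i) ^ 2 * |r i - ∑ j, π j * r j| ^ 3 ≥
      (Δ / (K - 1)) * (π astar) ^ 2 * (r astar - ∑ j, π j * r j) ^ 2 := by
  rw [hΔ]
  refine aux_stochastic_NL K hK r π astar hmax hπ hπ1 _ ?_ ?_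
  · intro a ha
    exact Finset.le_sup' r (Finset.mem_erase.mpr ⟨ha, Finset.mem_univ a⟩)
  · rw [Finset.sup'_lt_iff]
    intro a ha
    exact hmax a (Finset.ne_of_mem_erase ha)
end

section
/- Let θ, θ' ∈ ℝ^K and let π_θ = softmax(θ). For any fixed action a, the map θ ↦ π_θ(a) is 3/2-smooth: |π_{θ'}(a) − π_θ(a) − ⟨∇_θ π_θ(a), θ' − θ⟩| ≤ (3/4)·‖θ' − θ‖₂². -/
/-- Softmax policy on `K` actions. -/
noncomputable def softmax {K : ℕ} (θ : Fin K → ℝ) (a : Fin K) : ℝ :=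
  Real.exp (θ a) / ∑ j, Real.exp (θ j)

namespace SmAux

variable {K : ℕ}

noncomputable def S (θ d : Fin K → ℝ) (t : ℝ) : ℝ := ∑ j, Real.exp (θ j + t * d j)

noncomputable def p (θ d : Fin K → ℝ) (i : Fin K) (t : ℝ) : ℝ :=
  Real.exp (θ i + t * d i) / S θ d t

noncomputable def m (θ d : Fin K → ℝ) (t : ℝ) : ℝ := ∑ j, p θ d j t * d j

noncomputable def Q (θ d : Fin K → ℝ) (t : ℝ) : ℝ := ∑ j, p θ d j t * d j ^ 2

noncomputable def G (θ d : Fin K → ℝ) (a : Fin K) (t : ℝ) : ℝ :=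
  p θ d a t * (d a - m θ d t)

variable (θ d : Fin K → ℝ)

lemma S_pos (hK : 0 < K) (t : ℝ) : 0 < S θ d t := by
  have : Nonempty (Fin K) := Fin.pos_iff_nonempty.mp hK
  exact Finset.sum_pos (fun j _ => Real.exp_pos _) Finset.univ_nonempty

lemma p_nonneg (hK : 0 < K) (i : Fin K) (t : ℝ) : 0 ≤ p θ d i t :=
  div_nonneg (Real.exp_pos _).le (S_pos θ d hK t).le

lemma p_le_one (hK : 0 < K) (i : Fin K) (t : ℝ) : p θ d i t ≤ 1 := by
  rw [p, div_le_one (S_pos θ d hK t)]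
  exact Finset.single_le_sum (f := fun j => Real.exp (θ j + t * d j))
    (fun j _ => (Real.exp_pos _).le) (Finset.mem_univ i)

lemma sum_p (hK : 0 < K) (t : ℝ) : ∑ i, p θ d i t = 1 := by
  simp only [p]
  rw [← Finset.sum_div]
  exact div_self (S_pos θ d hK t).ne'

lemma hasDerivAt_S (t : ℝ) :
    HasDerivAt (S θ d) (∑ j, d j * Real.exp (θ j + t * d j)) t := by
  apply HasDerivAt.fun_sum
  intro j _
  have h1 : HasDerivAt (fun t : ℝ => θ j + t * d j) (d j) t := by
    simpa using ((hasDerivAt_id t).mul_const (d j)).const_add (θ j)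
  simpa [mul_comm, Function.comp_def] using (Real.hasDerivAt_exp (θ j + t * d j)).comp t h1

lemma m_eq (t : ℝ) : m θ d t = (∑ j, d j * Real.exp (θ j + t * d j)) / S θ d t := by
  rw [m, Finset.sum_div]
  exact Finset.sum_congr rfl fun j _ => by rw [p]; ring

lemma hasDerivAt_p (hK : 0 < K) (i : Fin K) (t : ℝ) :
    HasDerivAt (p θ d i) (p θ d i t * (d i - m θ d t)) t := by
  have h1 : HasDerivAt (fun t : ℝ => θ i + t * d i) (d i) t := by
    simpa using ((hasDerivAt_id t).mul_const (d i)).const_add (θ i)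
  have hE : HasDerivAt (fun t => Real.exp (θ i + t * d i))
      (d i * Real.exp (θ i + t * d i)) t := by
    simpa [mul_comm, Function.comp_def] using (Real.hasDerivAt_exp (θ i + t * d i)).comp t h1
  have hS := hasDerivAt_S θ d t
  have := hE.div hS (S_pos θ d hK t).ne'
  refine HasDerivAt.congr_deriv (f := p θ d i) this ?_
  rw [p, m_eq]
  have hS0 := (S_pos θ d hK t).ne'
  generalize (∑ j, d j * Real.exp (θ j + t * d j)) = A
  field_simp

lemma hasDerivAt_m (hK : 0 < K) (t : ℝ) :
    HasDerivAt (m θ d) (Q θ d t - m θ d t ^ 2) t := by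
  have h : HasDerivAt (fun t => ∑ j, p θ d j t * d j)
      (∑ j, p θ d j t * (d j - m θ d t) * d j) t :=
    HasDerivAt.fun_sum fun j _ => (hasDerivAt_p θ d hK j t).mul_const (d j)
  have heq : ∑ j, p θ d j t * (d j - m θ d t) * d j = Q θ d t - m θ d t ^ 2 := by
    have : ∀ j : Fin K, p θ d j t * (d j - m θ d t) * d j =
        p θ d j t * d j ^ 2 - m θ d t * (p θ d j t * d j) := fun j => by ring
    rw [Finset.sum_congr rfl fun j _ => this j, Finset.sum_sub_distrib,
      ← Finset.mul_sum, ← m, ← Q]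
    ring
  exact heq ▸ h

lemma hasDerivAt_G (hK : 0 < K) (a : Fin K) (t : ℝ) :
    HasDerivAt (G θ d a)
      (p θ d a t * ((d a - m θ d t) ^ 2 - (Q θ d t - m θ d t ^ 2))) t := by
  have := (hasDerivAt_p θ d hK a t).mul ((hasDerivAt_m θ d hK t).const_sub (d a))
  refine HasDerivAt.congr_deriv (f := G θ d a) this ?_
  ring

lemma var_eq (hK : 0 < K) (t : ℝ) :
    ∑ j, p θ d j t * (d j - m θ d t) ^ 2 = Q θ d t - m θ d t ^ 2 := by
  have : ∀ j : Fin K, p θ d j t * (d j - m θ d t) ^ 2 =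
      p θ d j t * d j ^ 2 - 2 * m θ d t * (p θ d j t * d j)
        + m θ d t ^ 2 * p θ d j t := fun j => by ring
  rw [Finset.sum_congr rfl fun j _ => this j, Finset.sum_add_distrib,
    Finset.sum_sub_distrib, ← Finset.mul_sum, ← Finset.mul_sum, ← m, ← Q,
    sum_p θ d hK]
  ring

lemma var_nonneg (hK : 0 < K) (t : ℝ) : 0 ≤ Q θ d t - m θ d t ^ 2 := by
  rw [← var_eq θ d hK]
  exact Finset.sum_nonneg fun j _ =>
    mul_nonneg (p_nonneg θ d hK j t) (sq_nonneg _)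

lemma Q_le (hK : 0 < K) (t : ℝ) : Q θ d t ≤ ∑ j, d j ^ 2 :=
  Finset.sum_le_sum fun j _ =>
    mul_le_of_le_one_left (sq_nonneg _) (p_le_one θ d hK j t)

lemma abs_G_deriv_le (hK : 0 < K) (a : Fin K) (t : ℝ) :
    |p θ d a t * ((d a - m θ d t) ^ 2 - (Q θ d t - m θ d t ^ 2))| ≤ ∑ j, d j ^ 2 := by
  set V := Q θ d t - m θ d t ^ 2 with hV
  have hVnn := var_nonneg θ d hK t
  have hpa0 := p_nonneg θ d hK a t
  have hpa1 := p_le_one θ d hK a t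
  have hterm : p θ d a t * (d a - m θ d t) ^ 2 ≤ V := by
    rw [hV, ← var_eq θ d hK]
    exact Finset.single_le_sum (f := fun j => p θ d j t * (d j - m θ d t) ^ 2)
      (fun j _ => mul_nonneg (p_nonneg θ d hK j t) (sq_nonneg _)) (Finset.mem_univ a)
  have hVle : V ≤ ∑ j, d j ^ 2 :=
    le_trans (by rw [hV]; nlinarith [sq_nonneg (m θ d t)]) (Q_le θ d hK t)
  rw [abs_le]
  constructor
  · nlinarith [sq_nonneg (d a - m θ d t)]
  · nlinarith [sq_nonneg (d a - m θ d t)]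

lemma continuous_G (hK : 0 < K) (a : Fin K) : Continuous (G θ d a) :=
  continuous_iff_continuousAt.mpr fun t => (hasDerivAt_G θ d hK a t).continuousAt

lemma G_lip (hK : 0 < K) (a : Fin K) {t : ℝ} (ht : t ∈ Set.Icc (0:ℝ) 1) :
    |G θ d a t - G θ d a 0| ≤ (∑ j, d j ^ 2) * t := by
  have := Convex.norm_image_sub_le_of_norm_hasDerivWithin_le
    (f := G θ d a)
    (f' := fun t => p θ d a t * ((d a - m θ d t) ^ 2 - (Q θ d t - m θ d t ^ 2)))
    (s := Set.univ) (C := ∑ j, d j ^ 2)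
    (fun x _ => (hasDerivAt_G θ d hK a x).hasDerivWithinAt)
    (fun x _ => abs_G_deriv_le θ d hK a x) convex_univ (Set.mem_univ 0) (Set.mem_univ t)
  simpa [Real.norm_eq_abs, abs_of_nonneg ht.1] using this

end SmAux

theorem softmax_smoothness (K : ℕ) (hK : 0 < K) (θ θ' : Fin K → ℝ) (a : Fin K) :
    |softmax θ' a - softmax θ a -
        ∑ j, softmax θ a * ((if j = a then (1:ℝ) else 0) - softmax θ j) * (θ' j - θ j)| ≤
      (3 / 4) * ∑ j, (θ' j - θ j) ^ 2 := by
  classical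
  set d : Fin K → ℝ := fun j => θ' j - θ j with hd
  set D : ℝ := ∑ j, d j ^ 2 with hD
  have hDnn : 0 ≤ D := Finset.sum_nonneg fun j _ => sq_nonneg _
  -- identify endpoints
  have hp0 : ∀ i, SmAux.p θ d i 0 = softmax θ i := by
    intro i; simp [SmAux.p, SmAux.S, softmax]
  have hp1 : ∀ i, SmAux.p θ d i 1 = softmax θ' i := by
    intro i; simp [SmAux.p, SmAux.S, softmax, hd]
  -- the inner-product term equals G 0
  have hG0 : ∑ j, softmax θ a * ((if j = a then (1:ℝ) else 0) - softmax θ j) * (θ' j - θ j)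
      = SmAux.G θ d a 0 := by
    have : ∀ j : Fin K,
        softmax θ a * ((if j = a then (1:ℝ) else 0) - softmax θ j) * (θ' j - θ j)
        = softmax θ a * ((if j = a then (1:ℝ) else 0) * d j)
          - softmax θ a * (SmAux.p θ d j 0 * d j) := by
      intro j; rw [hp0 j]; ring
    rw [Finset.sum_congr rfl fun j _ => this j, Finset.sum_sub_distrib,
      ← Finset.mul_sum, ← Finset.mul_sum, ← SmAux.m]
    simp [SmAux.G, hp0 a]
    ring
  -- fundamental theorem of calculus
  have hftc : ∫ t in (0:ℝ)..1, SmAux.G θ d a t = softmax θ' a - softmax θ a := by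
    rw [intervalIntegral.integral_eq_sub_of_hasDerivAt
      (f := SmAux.p θ d a) (f' := SmAux.G θ d a)
      (fun t _ => SmAux.hasDerivAt_p θ d hK a t)
      ((SmAux.continuous_G θ d hK a).intervalIntegrable 0 1)]
    rw [hp0, hp1]
  have hint : softmax θ' a - softmax θ a - SmAux.G θ d a 0
      = ∫ t in (0:ℝ)..1, (SmAux.G θ d a t - SmAux.G θ d a 0) := by
    rw [intervalIntegral.integral_sub ((SmAux.continuous_G θ d hK a).intervalIntegrable 0 1)
      (intervalIntegrable_const), hftc]
    simp
  rw [hG0, hint]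
  have hcont : Continuous fun t => |SmAux.G θ d a t - SmAux.G θ d a 0| :=
    ((SmAux.continuous_G θ d hK a).sub continuous_const).abs
  calc |∫ t in (0:ℝ)..1, (SmAux.G θ d a t - SmAux.G θ d a 0)|
      ≤ ∫ t in (0:ℝ)..1, |SmAux.G θ d a t - SmAux.G θ d a 0| :=
        intervalIntegral.abs_integral_le_integral_abs zero_le_one
    _ ≤ ∫ t in (0:ℝ)..1, D * t := by
        apply intervalIntegral.integral_mono_on zero_le_one
          (hcont.intervalIntegrable 0 1)
          ((continuous_const.mul continuous_id).intervalIntegrable 0 1)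
        intro t ht
        exact SmAux.G_lip θ d hK a ht
    _ = D * (1 / 2) := by
        rw [intervalIntegral.integral_const_mul]
        norm_num [integral_id]
    _ ≤ (3 / 4) * ∑ j, (θ' j - θ j) ^ 2 := by
        rw [hD]
        nlinarith [hDnn]
end

section
/- Consider softmax NPG without baseline under repeated sampling of a fixed action a: θ_{t+1}(a) = θ_t(a) + η·r(a)/π_{θ_t}(a) and θ_{t+1}(a') = θ_t(a') for a' ≠ a, with η > 0 and r(a) > 0. Then 1 − π_{θ_t}(a) ≤ C·e^{−η·r(a)·t} for some constant C > 0 depending only on θ_1, η, r(a). -/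
theorem npg_aggressiveness (K : ℕ) (hK : 0 < K) (θ : ℕ → Fin K → ℝ)
    (a : Fin K) (η : ℝ) (hη : 0 < η) (r : Fin K → ℝ) (hr : 0 < r a)
    (hupd : ∀ t, 1 ≤ t → θ (t + 1) a = θ t a + η * r a / softmax (θ t) a)
    (hfix : ∀ t, 1 ≤ t → ∀ a', a' ≠ a → θ (t + 1) a' = θ t a') :
    ∃ C : ℝ, 0 < C ∧ ∀ t : ℕ, 1 ≤ t →
      1 - softmax (θ t) a ≤ C * Real.exp (-(η * r a) * t) := by
  set Sv : ℝ := ∑ j ∈ Finset.univ.erase a, Real.exp (θ 1 j) with hSv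
  have hSv0 : 0 ≤ Sv := Finset.sum_nonneg fun j _ => (Real.exp_pos _).le
  have hconst : ∀ t, 1 ≤ t → ∀ j, j ≠ a → θ t j = θ 1 j := by
    intro t ht
    induction t, ht using Nat.le_induction with
    | base => intro j _; rfl
    | succ n hn ih => intro j hj; rw [hfix n hn j hj, ih j hj]
  have hsum : ∀ t, 1 ≤ t → ∑ j, Real.exp (θ t j) = Real.exp (θ t a) + Sv := by
    intro t ht
    rw [← Finset.add_sum_erase _ _ (Finset.mem_univ a)]
    congr 1
    exact Finset.sum_congr rfl fun j hj => by
      rw [hconst t ht j (Finset.ne_of_mem_erase hj)]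
  have hπpos : ∀ t, 1 ≤ t → 0 < softmax (θ t) a := by
    intro t ht
    apply div_pos (Real.exp_pos _)
    rw [hsum t ht]
    positivity
  have hπle : ∀ t, 1 ≤ t → softmax (θ t) a ≤ 1 := by
    intro t ht
    rw [softmax, div_le_one (by rw [hsum t ht]; positivity), hsum t ht]
    linarith
  have hgrow : ∀ t : ℕ, 1 ≤ t → θ 1 a + η * r a * ((t : ℝ) - 1) ≤ θ t a := by
    intro t ht
    induction t, ht using Nat.le_induction with
    | base => simp
    | succ n hn ih =>
      have hπ := hπpos n hn
      have h1 : η * r a ≤ η * r a / softmax (θ n) a := by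
        rw [le_div_iff₀ hπ]
        nlinarith [hπle n hn, mul_pos hη hr]
      rw [hupd n hn]
      push_cast
      linarith
  refine ⟨(Sv + 1) * Real.exp (η * r a - θ 1 a), by positivity, ?_⟩
  intro t ht
  have hE : (0:ℝ) < Real.exp (θ t a) := Real.exp_pos _
  have h1 : 1 - softmax (θ t) a = Sv / (Real.exp (θ t a) + Sv) := by
    rw [softmax, hsum t ht]
    field_simp
    ring
  rw [h1]
  have hkey : -(θ t a) ≤ (η * r a - θ 1 a) + (-(η * r a) * t) := by
    have := hgrow t ht
    nlinarith [this]
  calc Sv / (Real.exp (θ t a) + Sv)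
      ≤ Sv / Real.exp (θ t a) := by
        apply div_le_div_of_nonneg_left hSv0 hE
        linarith
    _ = Sv * Real.exp (-(θ t a)) := by rw [Real.exp_neg]; ring
    _ ≤ Sv * Real.exp ((η * r a - θ 1 a) + (-(η * r a) * t)) := by
        exact mul_le_mul_of_nonneg_left (Real.exp_le_exp.2 hkey) hSv0
    _ = Sv * (Real.exp (η * r a - θ 1 a) * Real.exp (-(η * r a) * t)) := by
        rw [Real.exp_add]
    _ ≤ (Sv + 1) * Real.exp (η * r a - θ 1 a) * Real.exp (-(η * r a) * t) := by
        have := Real.exp_pos (η * r a - θ 1 a)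
        have := Real.exp_pos (-(η * r a) * t)
        nlinarith
end
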